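/- Let λ be Lebesgue measure on [0,1], μ = (1/2)(λ + δ_0), and ν = (1/2)(λ + δ_1), where δ_0 and δ_1 are the Dirac measures at 0 and 1. Then H(λ|μ) = H(λ|ν) = log 2, hence J(μ,ν) ≤ 2 log 2 < ∞; on the other hand μ and ν are mutually not absolutely continuous, so H(μ|ν) = H(ν|μ) = +∞. In particular J(μ,ν) is strictly less than min{H(μ|ν), H(ν|μ)}. -/

import Mathlib

open MeasureTheory ProbabilityTheory Filter Topology
open scoped ENNReal NNReal Classical

/-- Relative entropy (Kullback–Leibler divergence) `H(υ|μ)`, as an extended real: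
`∫ log(dυ/dμ) dυ` if `υ ≪ μ` (and the integral exists), and `+∞` otherwise. -/
noncomputable def relEnt {α : Type*} [MeasurableSpace α] (υ μ : Measure α) : EReal :=
  if υ ≪ μ ∧ Integrable (llr υ μ) υ then ((∫ x, llr υ μ x ∂υ : ℝ) : EReal) else ⊤

/-- The J-divergence `J(μ,ν) = inf { H(υ|μ) + H(υ|ν) : υ a probability measure }`. -/
noncomputable def Jdiv {α : Type*} [MeasurableSpace α] (μ ν : Measure α) : EReal :=
  ⨅ (υ : Measure α) (_ : IsProbabilityMeasure υ), relEnt υ μ + relEnt υ ν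

lemma key (lam : Measure ℝ) [IsProbabilityMeasure lam] (a : ℝ) (ha : lam {a} = 0) :
    relEnt lam ((2 : ℝ≥0∞)⁻¹ • (lam + Measure.dirac a)) = ((Real.log 2 : ℝ) : EReal) := by
  set μ : Measure ℝ := (2 : ℝ≥0∞)⁻¹ • (lam + Measure.dirac a) with hμ
  have hprob : IsProbabilityMeasure μ := by
    constructor
    simp [hμ, Measure.smul_apply, measure_univ]
    rw [ENNReal.inv_two_add_inv_two]
  have hac : lam ≪ μ := by
    intro s hs
    simp only [hμ, Measure.smul_apply, Measure.coe_add, Pi.add_apply, smul_eq_mul] at hs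
    rcases mul_eq_zero.mp hs with h | h
    · simp at h
    · exact (add_eq_zero.mp h).1
  set f : ℝ → ℝ≥0∞ := Set.indicator {a}ᶜ (fun _ => (2:ℝ≥0∞)) with hf
  have hfm : Measurable f := measurable_const.indicator (measurableSet_singleton a).compl
  have hwd : μ.withDensity f = lam := by
    rw [hμ, withDensity_smul_measure, withDensity_add_measure]
    have haa : ∀ᵐ x ∂lam, x ≠ a := by
      rw [ae_iff]; simpa using ha
    have h1 : lam.withDensity f = (2 : ℝ≥0∞) • lam := by
      rw [withDensity_congr_ae (g := fun _ => (2:ℝ≥0∞)) ?_, withDensity_const]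
      filter_upwards [haa] with x hx
      simp [hf, hx]
    have h2 : (Measure.dirac a).withDensity f = 0 := by
      have hfe : f =ᵐ[Measure.dirac a] (fun _ => (0:ℝ≥0∞)) :=
        (ae_dirac_iff (p := fun x => f x = 0)
          (hfm (measurableSet_singleton 0))).mpr (by simp [hf])
      rw [withDensity_congr_ae hfe]
      simpa using withDensity_zero (μ := Measure.dirac a)
    rw [h1, h2, add_zero, smul_smul, ENNReal.inv_mul_cancel, one_smul] <;> norm_num
  have hrn : lam.rnDeriv μ =ᵐ[μ] f := by
    rw [← hwd]; exact Measure.rnDeriv_withDensity μ hfm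
  have hrn' : lam.rnDeriv μ =ᵐ[lam] f := hac.ae_le hrn
  have haa : ∀ᵐ x ∂lam, x ≠ a := by
    rw [ae_iff]; simpa using ha
  have hllr : llr lam μ =ᵐ[lam] fun _ => Real.log 2 := by
    filter_upwards [hrn', haa] with x hx hxa
    simp [llr, hx, hf, Set.indicator_apply, hxa]
  have hint : Integrable (llr lam μ) lam :=
    (integrable_const (Real.log 2)).congr hllr.symm
  have hval : ∫ x, llr lam μ x ∂lam = Real.log 2 := by
    rw [integral_congr_ae hllr, integral_const, probReal_univ]; simp
  rw [relEnt, if_pos ⟨hac, hint⟩, hval]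

/-- With λ Lebesgue measure on [0,1], μ = (1/2)(λ + δ₀), ν = (1/2)(λ + δ₁):
`H(λ|μ) = H(λ|ν) = log 2`, hence `J(μ,ν) ≤ 2 log 2 < ∞`; on the other hand μ, ν are
mutually not absolutely continuous, so `H(μ|ν) = H(ν|μ) = +∞`; in particular
`J(μ,ν) < min(H(μ|ν), H(ν|μ))`. -/
theorem stmt_8 (lam μ ν : Measure ℝ)
    (hlam : lam = volume.restrict (Set.Icc 0 1))
    (hμ : μ = (2 : ℝ≥0∞)⁻¹ • (lam + Measure.dirac 0))
    (hν : ν = (2 : ℝ≥0∞)⁻¹ • (lam + Measure.dirac 1)) :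
    relEnt lam μ = ((Real.log 2 : ℝ) : EReal) ∧
    relEnt lam ν = ((Real.log 2 : ℝ) : EReal) ∧
    Jdiv μ ν ≤ ((2 * Real.log 2 : ℝ) : EReal) ∧ Jdiv μ ν < ⊤ ∧
    ¬ μ ≪ ν ∧ ¬ ν ≪ μ ∧ relEnt μ ν = ⊤ ∧ relEnt ν μ = ⊤ ∧
    Jdiv μ ν < min (relEnt μ ν) (relEnt ν μ) := by
  have hprob : IsProbabilityMeasure lam := by
    constructor
    rw [hlam, Measure.restrict_apply_univ, Real.volume_Icc]
    norm_num
  have h0 : lam {0} = 0 := by rw [hlam]; simp [Measure.restrict_apply]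
  have h1 : lam {1} = 0 := by rw [hlam]; simp [Measure.restrict_apply]
  have hEμ : relEnt lam μ = ((Real.log 2 : ℝ) : EReal) := hμ ▸ key lam 0 h0
  have hEν : relEnt lam ν = ((Real.log 2 : ℝ) : EReal) := hν ▸ key lam 1 h1
  have hJle : Jdiv μ ν ≤ ((2 * Real.log 2 : ℝ) : EReal) := by
    have := iInf₂_le (f := fun (υ : Measure ℝ) (_ : IsProbabilityMeasure υ) =>
      relEnt υ μ + relEnt υ ν) lam hprob
    rw [hEμ, hEν] at this
    refine this.trans_eq ?_
    rw [← EReal.coe_add]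
    congr 1; ring
  have hμν : ¬ μ ≪ ν := by
    intro h
    have hν0 : ν {0} = 0 := by
      rw [hν]
      simp [Measure.smul_apply, h0, Measure.dirac_apply' _ (measurableSet_singleton 0)]
    have := h hν0
    rw [hμ] at this
    simp [Measure.smul_apply, h0, Measure.dirac_apply' _ (measurableSet_singleton 0)] at this
  have hνμ : ¬ ν ≪ μ := by
    intro h
    have hμ1 : μ {1} = 0 := by
      rw [hμ]
      simp [Measure.smul_apply, h1, Measure.dirac_apply' _ (measurableSet_singleton 1)]
    have := h hμ1
    rw [hν] at this
    simp [Measure.smul_apply, h1, Measure.dirac_apply' _ (measurableSet_singleton 1)] at this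
  have hRμν : relEnt μ ν = ⊤ := by rw [relEnt, if_neg (fun h => hμν h.1)]
  have hRνμ : relEnt ν μ = ⊤ := by rw [relEnt, if_neg (fun h => hνμ h.1)]
  have hJlt : Jdiv μ ν < ⊤ := hJle.trans_lt (EReal.coe_lt_top _)
  exact ⟨hEμ, hEν, hJle, hJlt, hμν, hνμ, hRμν, hRνμ, by rw [hRμν, hRνμ, min_self]; exact hJlt⟩
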